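/- For λ₂ ∈ (0,1) and θ ∈ ℝ, the complex number d(θ) = (λ₂cos(2πθ) + iλ₂')/(λ₂cos(2πθ) - iλ₂') (with λ₂' = √(1-λ₂²)) is unimodular and has argument arg(d(θ)) ∈ [2 arctan(λ₂'/λ₂), 2π - 2 arctan(λ₂'/λ₂)]; in particular d(θ) ≠ 1 for all θ. -/

import Mathlib

theorem det_range_avoids_one (lam2 : ℝ) (hlam : lam2 ∈ Set.Ioo (0:ℝ) 1) (θ : ℝ) :
    ‖((lam2 * Real.cos (2 * Real.pi * θ) : ℂ)
          + Complex.I * (Real.sqrt (1 - lam2 ^ 2) : ℂ))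
        / ((lam2 * Real.cos (2 * Real.pi * θ) : ℂ)
          - Complex.I * (Real.sqrt (1 - lam2 ^ 2) : ℂ))‖ = 1
    ∧ (∃ s : ℝ, 2 * Real.arctan (Real.sqrt (1 - lam2 ^ 2) / lam2) ≤ s
        ∧ s ≤ 2 * Real.pi - 2 * Real.arctan (Real.sqrt (1 - lam2 ^ 2) / lam2)
        ∧ ((lam2 * Real.cos (2 * Real.pi * θ) : ℂ)
              + Complex.I * (Real.sqrt (1 - lam2 ^ 2) : ℂ))
            / ((lam2 * Real.cos (2 * Real.pi * θ) : ℂ)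
              - Complex.I * (Real.sqrt (1 - lam2 ^ 2) : ℂ))
          = Complex.exp (Complex.I * (s : ℂ)))
    ∧ ((lam2 * Real.cos (2 * Real.pi * θ) : ℂ)
          + Complex.I * (Real.sqrt (1 - lam2 ^ 2) : ℂ))
        / ((lam2 * Real.cos (2 * Real.pi * θ) : ℂ)
          - Complex.I * (Real.sqrt (1 - lam2 ^ 2) : ℂ)) ≠ 1 := by
  obtain ⟨h0, h1⟩ := hlam
  rw [show ((lam2:ℂ) * ((Real.cos (2*Real.pi*θ):ℝ):ℂ)) = (((lam2 * Real.cos (2*Real.pi*θ)):ℝ):ℂ)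
    from (Complex.ofReal_mul _ _).symm]
  set a : ℝ := lam2 * Real.cos (2 * Real.pi * θ) with ha
  set b : ℝ := Real.sqrt (1 - lam2 ^ 2) with hbdef
  have hb2 : b ^ 2 = 1 - lam2 ^ 2 := by
    rw [hbdef, Real.sq_sqrt]; nlinarith
  have hb : 0 < b := by
    rw [hbdef]; exact Real.sqrt_pos.2 (by nlinarith)
  set r : ℝ := Real.sqrt (a ^ 2 + b ^ 2) with hrdef
  have hr2 : r ^ 2 = a ^ 2 + b ^ 2 := Real.sq_sqrt (by positivity)
  have hr : 0 < r := Real.sqrt_pos.2 (by positivity)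
  have hden : ((a : ℂ) - Complex.I * (b : ℂ)) ≠ 0 := by
    intro h
    have := congrArg Complex.im h
    simp at this
    linarith
  -- |a| ≤ lam2 * r, i.e. a^2 ≤ lam2^2 * r^2
  have hcb : |Real.cos (2 * Real.pi * θ)| ≤ 1 := Real.abs_cos_le_one _
  have hkey : a ^ 2 ≤ lam2 ^ 2 * r ^ 2 := by
    have hc2 : Real.cos (2 * Real.pi * θ) ^ 2 ≤ 1 := Real.cos_sq_le_one _
    rw [hr2]
    have h3 : a ^ 2 = lam2 ^ 2 * Real.cos (2 * Real.pi * θ) ^ 2 := by rw [ha]; ring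
    have hfac : 0 ≤ (1 - lam2 ^ 2) * (1 - Real.cos (2 * Real.pi * θ) ^ 2) :=
      mul_nonneg (by nlinarith) (by nlinarith)
    nlinarith [hfac, hb2, h3, sq_nonneg lam2]
  have har1 : a / r ≤ lam2 := by
    rw [div_le_iff₀ hr]
    nlinarith [hkey, mul_pos h0 hr, sq_nonneg (a - lam2 * r), sq_nonneg (a + lam2 * r)]
  have har2 : -lam2 ≤ a / r := by
    rw [le_div_iff₀ hr]
    nlinarith [hkey, mul_pos h0 hr, sq_nonneg (a - lam2 * r), sq_nonneg (a + lam2 * r)]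
  have harb : a / r ∈ Set.Icc (-1 : ℝ) 1 := ⟨by linarith, by linarith⟩
  set φ : ℝ := Real.arccos (a / r) with hφdef
  have hcosφ : Real.cos φ = a / r := Real.cos_arccos harb.1 harb.2
  have hsinφ : Real.sin φ = b / r := by
    rw [hφdef, Real.sin_arccos]
    have : 1 - (a / r) ^ 2 = (b / r) ^ 2 := by
      field_simp
      nlinarith
    rw [this, Real.sqrt_sq (by positivity)]
  -- arctan(b/lam2) = arccos lam2
  have harctan : Real.arctan (b / lam2) = Real.arccos lam2 := by
    rw [Real.arccos_eq_arctan h0, ← hbdef]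
  have hφ1 : Real.arccos lam2 ≤ φ := by
    rw [hφdef]
    rcases eq_or_lt_of_le har1 with h | h
    · rw [h]
    · have h2 : Real.arcsin (a / r) ≤ Real.arcsin lam2 := Real.monotone_arcsin har1
      simp only [Real.arccos]
      linarith
  have hφ2 : φ ≤ Real.pi - Real.arccos lam2 := by
    have : Real.pi - Real.arccos lam2 = Real.arccos (-lam2) := (Real.arccos_neg lam2).symm
    rw [this, hφdef]
    have h2 : Real.arcsin (-lam2) ≤ Real.arcsin (a / r) :=
      Real.monotone_arcsin har2
    simp only [Real.arccos]
    linarith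
  -- the main identity: z = exp(I * (2φ))
  have hcos2 : Real.cos (2 * φ) = (a ^ 2 - b ^ 2) / r ^ 2 := by
    rw [Real.cos_two_mul, hcosφ]
    field_simp
    nlinarith
  have hsin2 : Real.sin (2 * φ) = 2 * a * b / r ^ 2 := by
    rw [Real.sin_two_mul, hsinφ, hcosφ]
    field_simp
  have hexp : ((a : ℂ) + Complex.I * (b : ℂ)) / ((a : ℂ) - Complex.I * (b : ℂ))
      = Complex.exp (Complex.I * ((2 * φ : ℝ) : ℂ)) := by
    rw [div_eq_iff hden, mul_comm Complex.I ((2 * φ : ℝ) : ℂ), Complex.exp_mul_I]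
    rw [← Complex.ofReal_cos, ← Complex.ofReal_sin, hcos2, hsin2]
    have hr2' : (r : ℂ) ^ 2 = (a : ℂ) ^ 2 + (b : ℂ) ^ 2 := by
      norm_cast
    have hrne : (r : ℂ) ≠ 0 := by
      norm_cast; exact hr.ne'
    push_cast
    field_simp
    rw [hr2']
    ring_nf
    simp only [Complex.I_sq]
    ring
  have habs : ‖((a : ℂ) + Complex.I * (b : ℂ))
      / ((a : ℂ) - Complex.I * (b : ℂ))‖ = 1 := by
    rw [hexp, mul_comm]
    exact Complex.norm_exp_ofReal_mul_I _
  clear_value a b r φ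
  refine ⟨habs, ⟨2 * φ, ?_, ?_, hexp⟩, ?_⟩
  · rw [harctan]; linarith
  · rw [harctan]; linarith
  · intro h
    rw [div_eq_one_iff_eq hden] at h
    have him := congrArg Complex.im h
    simp only [Complex.add_im, Complex.sub_im, Complex.mul_im, Complex.I_re, Complex.I_im,
      Complex.ofReal_re, Complex.ofReal_im, one_mul, mul_zero, add_zero, zero_add,
      mul_one, zero_mul] at him
    rw [zero_sub] at him
    exact (neg_lt_self hb).ne him.symm
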